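/- Let $X$ be a topological space and let $\mathcal{R}$ be a sheaf of commutative rings on $X$ all of whose stalks are local rings. Let $\mathcal{M}$ be a sheaf of $\mathcal{R}$-modules which is locally projective of finite rank, i.e. every point $x \in X$ has an open neighborhood $U$ for which there exist a natural number $N$ and a sheaf $\mathcal{F}$ of $\mathcal{R}|_U$-modules such that $\mathcal{M}|_U \oplus \mathcal{F}$ is isomorphic to the free module $(\mathcal{R}|_U)^N$. Then $\mathcal{M}$ is locally free: every point $x \in X$ has an open neighborhood $V$ and a natural number $k$ such that $\mathcal{M}|_V$ is isomorphic, as a sheaf of $\mathcal{R}|_V$-modules, to $(\mathcal{R}|_V)^k$. -/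

import Mathlib

open CategoryTheory TopologicalSpace Opposite

universe u

/-- A sheaf of modules over a sheaf of commutative rings `R` on a topological
space `X`, given concretely: for each open `V` an `R(V)`-module `obj V`,
with additive restriction maps that are semilinear with respect to the
restriction maps of `R`, satisfying the identity, composition and unique
gluing (sheaf) axioms. -/
structure SheafOfModulesOver {X : TopCat.{u}} (R : TopCat.Sheaf CommRingCat.{u} X) where
  obj : Opens X → Type u
  addCommGroup : ∀ V : Opens X, AddCommGroup (obj V)
  module : ∀ V : Opens X, Module (R.presheaf.obj (op V)) (obj V)
  res : ∀ {V W : Opens X}, W ≤ V → obj V → obj W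
  res_self : ∀ (V : Opens X) (m : obj V), res le_rfl m = m
  res_res : ∀ {V W Z : Opens X} (hWV : W ≤ V) (hZW : Z ≤ W) (m : obj V),
    res hZW (res hWV m) = res (hZW.trans hWV) m
  res_add : ∀ {V W : Opens X} (h : W ≤ V) (m m' : obj V),
    res h (m + m') = res h m + res h m'
  res_smul : ∀ {V W : Opens X} (h : W ≤ V) (r : R.presheaf.obj (op V)) (m : obj V),
    res h (r • m) = R.presheaf.map (homOfLE h).op r • res h m
  isSheaf : ∀ {ι : Type u} (V : ι → Opens X) (s : ∀ i : ι, obj (V i)),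
    (∀ i j : ι, res (inf_le_left : V i ⊓ V j ≤ V i) (s i)
      = res (inf_le_right : V i ⊓ V j ≤ V j) (s j)) →
    ∃! t : obj (iSup V), ∀ i : ι, res (le_iSup V i) t = s i

attribute [instance] SheafOfModulesOver.addCommGroup SheafOfModulesOver.module




section helpers
open Matrix

lemma idem_factor {S : Type u} [CommRing S] [IsLocalRing S] {N : ℕ}
    (Q : Matrix (Fin N) (Fin N) S) (hQ : Q * Q = Q) :
    ∃ (k : ℕ) (G : Matrix (Fin N) (Fin k) S) (H : Matrix (Fin k) (Fin N) S),
      H * G = 1 ∧ G * H = Q := by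
  classical
  set f : (Fin N → S) →ₗ[S] (Fin N → S) := Matrix.toLin' Q with hf
  have hff : ∀ v, f (f v) = f v := by
    intro v
    rw [hf, ← Matrix.toLin'_mul_apply, hQ]
  set p : Submodule S (Fin N → S) := LinearMap.range f with hp
  have hfix : ∀ v : (Fin N → S), v ∈ p → f v = v := by
    rintro v ⟨w, rfl⟩; exact hff w
  haveI : Module.Finite S p := Module.Finite.range f
  haveI : Module.Projective S p :=
    Module.Projective.of_split p.subtype f.rangeRestrict (by
      refine LinearMap.ext fun ⟨v, hv⟩ => Subtype.ext ?_
      show f v = v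
      exact hfix v hv)
  haveI : Module.FinitePresentation S p := Module.finitePresentation_of_projective S p
  haveI : Module.Free S p := Module.free_of_flat_of_isLocalRing
  let b0 := Module.Free.chooseBasis S p
  let k := Fintype.card (Module.Free.ChooseBasisIndex S p)
  let b : Module.Basis (Fin k) S p := b0.reindex (Fintype.equivFin _)
  let g : (Fin k → S) →ₗ[S] (Fin N → S) := p.subtype ∘ₗ (b.equivFun.symm : (Fin k → S) →ₗ[S] p)
  let h : (Fin N → S) →ₗ[S] (Fin k → S) := (b.equivFun : p →ₗ[S] (Fin k → S)) ∘ₗ f.rangeRestrict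
  have hg : ∀ a, (g a : Fin N → S) = (b.equivFun.symm a : p) := fun a => rfl
  have hhg : h ∘ₗ g = LinearMap.id := by
    refine LinearMap.ext fun a => ?_
    show b.equivFun (f.rangeRestrict (g a)) = a
    have hr : f.rangeRestrict (g a) = b.equivFun.symm a := by
      apply Subtype.ext
      show f (g a) = ((b.equivFun.symm a : p) : Fin N → S)
      rw [hg]
      exact hfix _ (b.equivFun.symm a).2
    rw [hr, LinearEquiv.apply_symm_apply]
  have hgh : g ∘ₗ h = f := by
    refine LinearMap.ext fun v => ?_
    show ((b.equivFun.symm (b.equivFun (f.rangeRestrict v)) : p) : Fin N → S) = f v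
    rw [LinearEquiv.symm_apply_apply]
    rfl
  refine ⟨k, LinearMap.toMatrix' g, LinearMap.toMatrix' h, ?_, ?_⟩
  · rw [← LinearMap.toMatrix'_comp, hhg, LinearMap.toMatrix'_id]
  · rw [← LinearMap.toMatrix'_comp, hgh, hf, LinearMap.toMatrix'_toLin']

variable {X : TopCat.{u}} (R : TopCat.Sheaf CommRingCat.{u} X)

lemma lift_fin {ι : Type} [Finite ι] (x : X) (s : ι → R.presheaf.stalk x) :
    ∃ (V : Opens X) (hx : x ∈ V) (f : ι → R.presheaf.obj (op V)),
      ∀ i, R.presheaf.germ V x hx (f i) = s i := by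
  choose Vs hxs fs hfs using fun i => R.presheaf.germ_exist (x := x) (s i)
  refine ⟨⟨⋂ i, (Vs i : Set X), isOpen_iInter_of_finite fun i => (Vs i).2⟩,
    Set.mem_iInter.2 fun i => hxs i, fun i =>
      R.presheaf.map (homOfLE (fun y hy => Set.mem_iInter.1 hy i : _ ≤ Vs i)).op (fs i),
    fun i => ?_⟩
  rw [R.presheaf.germ_res_apply, hfs]

lemma eq_fin {ι : Type} [Finite ι] (x : X) (V₀ : Opens X) (hx0 : x ∈ V₀)
    (s t : ι → R.presheaf.obj (op V₀))
    (h : ∀ i, R.presheaf.germ V₀ x hx0 (s i) = R.presheaf.germ V₀ x hx0 (t i)) :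
    ∃ (V : Opens X) (hle : V ≤ V₀) (_ : x ∈ V),
      ∀ i, R.presheaf.map (homOfLE hle).op (s i) = R.presheaf.map (homOfLE hle).op (t i) := by
  have key : ∀ i, ∃ (W : Opens X) (_ : x ∈ W) (hW : W ≤ V₀),
      R.presheaf.map (homOfLE hW).op (s i) = R.presheaf.map (homOfLE hW).op (t i) := by
    intro i
    obtain ⟨W, m, iU, iV, hi⟩ := R.presheaf.germ_eq x hx0 hx0 (s i) (t i) (h i)
    exact ⟨W, m, iU.le, hi⟩
  choose Ws hxWs hWs hs using key
  refine ⟨⟨⋂ i, (Ws i : Set X), isOpen_iInter_of_finite fun i => (Ws i).2⟩ ⊓ V₀,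
    inf_le_right, ⟨Set.mem_iInter.2 fun i => hxWs i, hx0⟩, fun i => ?_⟩
  have hle2 : (⟨⋂ i, (Ws i : Set X), isOpen_iInter_of_finite fun i => (Ws i).2⟩ ⊓ V₀ : Opens X)
      ≤ Ws i := le_trans inf_le_left (fun y hy => Set.mem_iInter.1 hy i)
  have e1 : (homOfLE (inf_le_right : _ ⊓ V₀ ≤ V₀)).op
      = ((homOfLE (hWs i)).op ≫ (homOfLE hle2).op) := rfl
  rw [e1, R.presheaf.map_comp, CategoryTheory.comp_apply, CategoryTheory.comp_apply, hs i]

end helpers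

set_option maxHeartbeats 2000000 in
/-- Let `R` be a sheaf of commutative rings on a topological
space `X` all of whose stalks are local rings, and let `M` be a sheaf of
`R`-modules which is locally projective of finite rank: every point has an
open neighborhood `U` on which there are an `N : ℕ` and a sheaf of modules
`F` with `M|_U ⊕ F|_U ≅ (R|_U)^N` (an isomorphism of sheaves of modules on
`U`, i.e. a compatible family of `R(V)`-linear equivalences for `V ≤ U`).
Then `M` is locally free: every point has an open neighborhood `V` with
`M|_V ≅ (R|_V)^k` for some `k : ℕ`. -/
theorem stmt_0 {X : TopCat.{u}} (R : TopCat.Sheaf CommRingCat.{u} X)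
    (hstalks : ∀ x : X, IsLocalRing (R.presheaf.stalk x))
    (M : SheafOfModulesOver R)
    (hproj : ∀ x : X, ∃ (U : Opens X) (_ : x ∈ U) (N : ℕ) (F : SheafOfModulesOver R)
      (e : ∀ V : Opens X, V ≤ U →
        (M.obj V × F.obj V) ≃ₗ[R.presheaf.obj (op V)] (Fin N → R.presheaf.obj (op V))),
      ∀ (V W : Opens X) (hVU : V ≤ U) (hWV : W ≤ V) (m : M.obj V) (f : F.obj V),
        e W (hWV.trans hVU) (M.res hWV m, F.res hWV f)
          = fun i => R.presheaf.map (homOfLE hWV).op (e V hVU (m, f) i)) :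
    ∀ x : X, ∃ (V : Opens X) (_ : x ∈ V) (k : ℕ)
      (e : ∀ W : Opens X, W ≤ V →
        M.obj W ≃ₗ[R.presheaf.obj (op W)] (Fin k → R.presheaf.obj (op W))),
      ∀ (W Z : Opens X) (hWV : W ≤ V) (hZW : Z ≤ W) (m : M.obj W),
        e Z (hZW.trans hWV) (M.res hZW m)
          = fun i => R.presheaf.map (homOfLE hZW).op (e W hWV m i) := by
  classical
  intro x
  obtain ⟨U, hxU, N, F, e, hcomp⟩ := hproj x
  -- restriction of zero is zero
  have hF0 : ∀ {V W : Opens X} (h : W ≤ V), F.res h (0 : F.obj V) = 0 := by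
    intro V W h
    have h1 := F.res_add h 0 0
    rw [add_zero] at h1
    have h2 : F.res h (0 : F.obj V) + F.res h 0 = F.res h 0 + 0 := by
      rw [add_zero]; exact h1.symm
    exact add_left_cancel h2
  -- restriction ring map lemmas
  have hρ_id : ∀ (V : Opens X) (r : R.presheaf.obj (op V)),
      R.presheaf.map (homOfLE (le_refl V)).op r = r := by
    intro V r
    have h1 : (homOfLE (le_refl V)).op = 𝟙 (op V) := rfl
    rw [h1, R.presheaf.map_id]
    rfl
  have hρ_comp : ∀ {V W Z : Opens X} (h1 : W ≤ V) (h2 : Z ≤ W) (r : R.presheaf.obj (op V)),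
      R.presheaf.map (homOfLE h2).op (R.presheaf.map (homOfLE h1).op r)
        = R.presheaf.map (homOfLE (h2.trans h1)).op r := by
    intro V W Z h1 h2 r
    have h3 : (homOfLE (h2.trans h1)).op = (homOfLE h1).op ≫ (homOfLE h2).op := rfl
    rw [h3, R.presheaf.map_comp, CategoryTheory.comp_apply]
  -- naturality on the M-component
  have hnatM : ∀ (V W : Opens X) (hVU : V ≤ U) (hWV : W ≤ V) (m : M.obj V),
      e W (hWV.trans hVU) (M.res hWV m, 0)
        = fun i => R.presheaf.map (homOfLE hWV).op (e V hVU (m, 0) i) := by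
    intro V W hVU hWV m
    have h1 := hcomp V W hVU hWV m 0
    rwa [hF0 hWV] at h1
  -- naturality for the inverse
  have hnat_symm : ∀ (V W : Opens X) (hVU : V ≤ U) (hWV : W ≤ V)
      (v : Fin N → R.presheaf.obj (op V)),
      (e W (hWV.trans hVU)).symm (fun i => R.presheaf.map (homOfLE hWV).op (v i))
        = (M.res hWV ((e V hVU).symm v).1, F.res hWV ((e V hVU).symm v).2) := by
    intro V W hVU hWV v
    rw [LinearEquiv.symm_apply_eq,
      hcomp V W hVU hWV ((e V hVU).symm v).1 ((e V hVU).symm v).2]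
    funext i
    rw [show (((e V hVU).symm v).1, ((e V hVU).symm v).2) = (e V hVU).symm v from rfl,
      LinearEquiv.apply_symm_apply]
  -- the idempotent matrix
  set P : Matrix (Fin N) (Fin N) (R.presheaf.obj (op U)) :=
    (fun i j => e U le_rfl (((e U le_rfl).symm (Pi.single j 1)).1, 0) i) with hPdef
  have hq : ∀ (W : Opens X) (hWU : W ≤ U) (v : Fin N → R.presheaf.obj (op W)),
      e W hWU (((e W hWU).symm v).1, 0)
        = (P.map (R.presheaf.map (homOfLE hWU).op)).mulVec v := by
    intro W hWU v
    have hL : ((e W hWU).toLinearMap ∘ₗ LinearMap.inl _ _ _ ∘ₗ LinearMap.fst _ _ _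
          ∘ₗ (e W hWU).symm.toLinearMap)
        = (P.map (R.presheaf.map (homOfLE hWU).op)).mulVecLin := by
      refine Module.Basis.ext (Pi.basisFun (R.presheaf.obj (op W)) (Fin N)) fun j => ?_
      rw [Pi.basisFun_apply]
      have hsingle : (Pi.single j 1 : Fin N → R.presheaf.obj (op W))
          = fun i => R.presheaf.map (homOfLE hWU).op ((Pi.single j 1 : Fin N → _) i) := by
        funext i
        by_cases hij : i = j
        · subst hij; simp only [Pi.single_eq_same]; exact (map_one _).symm
        · simp only [Pi.single_eq_of_ne hij]; exact (map_zero _).symm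
      show e W hWU (((e W hWU).symm (Pi.single j 1)).1, 0)
          = (P.map (R.presheaf.map (homOfLE hWU).op)).mulVec (Pi.single j 1)
      rw [Matrix.mulVec_single]
      conv_lhs => rw [hsingle]
      rw [hnat_symm U W le_rfl hWU (Pi.single j 1)]
      show e W hWU (M.res hWU ((e U le_rfl).symm (Pi.single j 1)).1, 0) = _
      rw [hnatM U W le_rfl hWU ((e U le_rfl).symm (Pi.single j 1)).1]
      funext i
      rw [MulOpposite.op_one, one_smul]
      rfl
    exact LinearMap.congr_fun hL v
  have hmapid : P.map (R.presheaf.map (homOfLE (le_refl U)).op) = P :=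
    Matrix.ext fun i j => hρ_id U (P i j)
  have hqU : ∀ v, e U le_rfl (((e U le_rfl).symm v).1, 0) = P.mulVec v := by
    intro v; rw [hq U le_rfl v, hmapid]
  have hPP : P * P = P := by
    refine Matrix.ext fun i j => ?_
    have h3 : (e U le_rfl).symm (e U le_rfl (((e U le_rfl).symm (Pi.single j 1)).1, 0))
        = (((e U le_rfl).symm (Pi.single j 1)).1, 0) := LinearEquiv.symm_apply_apply _ _
    have h2 : P.mulVec (P.mulVec (Pi.single j 1)) = P.mulVec (Pi.single j 1) := by
      conv_lhs => rw [← hqU (Pi.single j 1)]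
      rw [← hqU (e U le_rfl (((e U le_rfl).symm (Pi.single j 1)).1, 0)), h3]
      exact hqU _
    rw [Matrix.mulVec_mulVec] at h2
    have h4 := congrFun h2 i
    simpa using h4
  -- pass to the stalk
  haveI := hstalks x
  set φ : R.presheaf.obj (op U) →+* R.presheaf.stalk x := (CommRingCat.Hom.hom <| R.presheaf.germ U x hxU : _) with hφdef
  obtain ⟨k, G', H', hHG', hGH'⟩ := idem_factor (P.map φ)
    (by rw [← Matrix.map_mul, hPP])
  -- lift the matrices to a neighborhood
  obtain ⟨V₀, hx0, f₀, hf₀⟩ := lift_fin R x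
    (Sum.elim (fun p : Fin N × Fin k => G' p.1 p.2) (fun p : Fin k × Fin N => H' p.1 p.2))
  set V₁ := V₀ ⊓ U with hV₁def
  have hxV₁ : x ∈ V₁ := ⟨hx0, hxU⟩
  set ρ₀ : R.presheaf.obj (op V₀) →+* R.presheaf.obj (op V₁) :=
    (CommRingCat.Hom.hom <| R.presheaf.map (homOfLE (inf_le_left : V₁ ≤ V₀)).op : _) with hρ₀def
  set ρU₁ : R.presheaf.obj (op U) →+* R.presheaf.obj (op V₁) :=
    (CommRingCat.Hom.hom <| R.presheaf.map (homOfLE (inf_le_right : V₁ ≤ U)).op : _) with hρU₁def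
  set φ₁ : R.presheaf.obj (op V₁) →+* R.presheaf.stalk x :=
    (CommRingCat.Hom.hom <| R.presheaf.germ V₁ x hxV₁ : _) with hφ₁def
  set G₁ : Matrix (Fin N) (Fin k) (R.presheaf.obj (op V₁)) :=
    (fun i j => ρ₀ (f₀ (Sum.inl (i, j)))) with hG₁def
  set H₁ : Matrix (Fin k) (Fin N) (R.presheaf.obj (op V₁)) :=
    (fun i j => ρ₀ (f₀ (Sum.inr (i, j)))) with hH₁def
  have hmapG : G₁.map φ₁ = G' := by
    refine Matrix.ext fun i j => ?_
    show R.presheaf.germ V₁ x hxV₁ (R.presheaf.map _ (f₀ (Sum.inl (i, j)))) = _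
    rw [R.presheaf.germ_res_apply]
    exact hf₀ (Sum.inl (i, j))
  have hmapH : H₁.map φ₁ = H' := by
    refine Matrix.ext fun i j => ?_
    show R.presheaf.germ V₁ x hxV₁ (R.presheaf.map _ (f₀ (Sum.inr (i, j)))) = _
    rw [R.presheaf.germ_res_apply]
    exact hf₀ (Sum.inr (i, j))
  have hφP : ∀ i j, φ₁ ((P.map ρU₁) i j) = (P.map φ) i j := by
    intro i j
    show R.presheaf.germ V₁ x hxV₁ (R.presheaf.map _ (P i j)) = φ (P i j)
    rw [R.presheaf.germ_res_apply]
  -- find a smaller neighborhood where the matrix identities hold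
  have heqgerm : ∀ i : (Fin k × Fin k) ⊕ (Fin N × Fin N),
      R.presheaf.germ V₁ x hxV₁
        (Sum.elim (fun p : Fin k × Fin k => (H₁ * G₁) p.1 p.2)
          (fun p : Fin N × Fin N => (G₁ * H₁) p.1 p.2) i)
      = R.presheaf.germ V₁ x hxV₁
        (Sum.elim (fun p : Fin k × Fin k => (1 : Matrix (Fin k) (Fin k) _) p.1 p.2)
          (fun p : Fin N × Fin N => (P.map ρU₁) p.1 p.2) i) := by
    rintro (⟨i, j⟩ | ⟨i, j⟩)
    · show φ₁ ((H₁ * G₁) i j) = φ₁ ((1 : Matrix (Fin k) (Fin k) _) i j)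
      have hl : φ₁ ((H₁ * G₁) i j) = ((H₁ * G₁).map φ₁) i j := rfl
      have hr : φ₁ ((1 : Matrix (Fin k) (Fin k) (R.presheaf.obj (op V₁))) i j)
          = ((1 : Matrix (Fin k) (Fin k) (R.presheaf.obj (op V₁))).map φ₁) i j := rfl
      rw [hl, hr, Matrix.map_mul, hmapG, hmapH, hHG',
        Matrix.map_one φ₁ (map_zero φ₁) (map_one φ₁)]
    · show φ₁ ((G₁ * H₁) i j) = φ₁ ((P.map ρU₁) i j)
      have hl : φ₁ ((G₁ * H₁) i j) = ((G₁ * H₁).map φ₁) i j := rfl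
      rw [hl, Matrix.map_mul, hmapG, hmapH, hGH', hφP i j]
  obtain ⟨V, hleV, hxV, hres⟩ := eq_fin R x V₁ hxV₁ _ _ heqgerm
  set ρ₂ : R.presheaf.obj (op V₁) →+* R.presheaf.obj (op V) :=
    (CommRingCat.Hom.hom <| R.presheaf.map (homOfLE hleV).op : _) with hρ₂def
  have hVU : V ≤ U := hleV.trans inf_le_right
  set G : Matrix (Fin N) (Fin k) (R.presheaf.obj (op V)) := G₁.map ρ₂ with hGdef
  set H : Matrix (Fin k) (Fin N) (R.presheaf.obj (op V)) := H₁.map ρ₂ with hHdef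
  have hHG : H * G = 1 := by
    have h1 : (H₁ * G₁).map ρ₂ = (1 : Matrix (Fin k) (Fin k) _).map ρ₂ :=
      Matrix.ext fun i j => hres (Sum.inl (i, j))
    rw [hHdef, hGdef, ← Matrix.map_mul, h1, Matrix.map_one ρ₂ (map_zero _) (map_one _)]
  have hGH : G * H = P.map (R.presheaf.map (homOfLE hVU).op) := by
    have h1 : (G₁ * H₁).map ρ₂ = (P.map ρU₁).map ρ₂ :=
      Matrix.ext fun i j => hres (Sum.inr (i, j))
    rw [hGdef, hHdef, ← Matrix.map_mul, h1]
    exact Matrix.ext fun i j => hρ_comp _ _ (P i j)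
  -- matrices restricted to W ≤ V
  have hGHW : ∀ {W : Opens X} (hWV : W ≤ V),
      (G.map (CommRingCat.Hom.hom <| R.presheaf.map (homOfLE hWV).op : R.presheaf.obj (op V) →+* _))
          * (H.map (CommRingCat.Hom.hom <| R.presheaf.map (homOfLE hWV).op : R.presheaf.obj (op V) →+* _))
        = P.map (R.presheaf.map (homOfLE (hWV.trans hVU)).op) := by
    intro W hWV
    rw [← Matrix.map_mul, hGH]
    exact Matrix.ext fun i j => hρ_comp _ _ (P i j)
  have hHGW : ∀ {W : Opens X} (hWV : W ≤ V),
      (H.map (CommRingCat.Hom.hom <| R.presheaf.map (homOfLE hWV).op : R.presheaf.obj (op V) →+* _))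
          * (G.map (CommRingCat.Hom.hom <| R.presheaf.map (homOfLE hWV).op : R.presheaf.obj (op V) →+* _)) = 1 := by
    intro W hWV
    rw [← Matrix.map_mul, hHG, Matrix.map_one _ (map_zero _) (map_one _)]
  -- the family of isomorphisms
  refine ⟨V, hxV, k, fun W hWV =>
    { toFun := fun m =>
        (H.map (CommRingCat.Hom.hom <| R.presheaf.map (homOfLE hWV).op : R.presheaf.obj (op V) →+* _)).mulVec
          (e W (hWV.trans hVU) (m, 0))
      map_add' := by
        intro m m'
        show (H.map (CommRingCat.Hom.hom <| R.presheaf.map (homOfLE hWV).op : R.presheaf.obj (op V) →+* _)).mulVec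
          (e W (hWV.trans hVU) (m + m', 0)) = _
        rw [show ((m + m' : M.obj W), (0 : F.obj W)) = (m, 0) + (m', 0) by
          rw [Prod.mk_add_mk, add_zero], map_add, Matrix.mulVec_add]
      map_smul' := by
        intro r m
        show (H.map (CommRingCat.Hom.hom <| R.presheaf.map (homOfLE hWV).op : R.presheaf.obj (op V) →+* _)).mulVec
          (e W (hWV.trans hVU) (r • m, 0)) = _
        rw [show ((r • m : M.obj W), (0 : F.obj W)) = r • ((m, 0) : M.obj W × F.obj W) by
          rw [Prod.smul_mk, smul_zero], map_smul, Matrix.mulVec_smul]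
        rfl
      invFun := fun a => ((e W (hWV.trans hVU)).symm
        ((G.map (CommRingCat.Hom.hom <| R.presheaf.map (homOfLE hWV).op : R.presheaf.obj (op V) →+* _)).mulVec a)).1
      left_inv := by
        intro m
        show ((e W (hWV.trans hVU)).symm
          ((G.map _).mulVec ((H.map _).mulVec (e W (hWV.trans hVU) (m, 0))))).1 = m
        rw [Matrix.mulVec_mulVec, hGHW hWV, ← hq W (hWV.trans hVU) (e W (hWV.trans hVU) (m, 0)),
          LinearEquiv.symm_apply_apply]
        rw [show ((((m, 0) : M.obj W × F.obj W).1, (0 : F.obj W)))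
            = ((m, 0) : M.obj W × F.obj W) from rfl,
          LinearEquiv.symm_apply_apply]
      right_inv := by
        intro a
        show (H.map _).mulVec (e W (hWV.trans hVU) (((e W (hWV.trans hVU)).symm
          ((G.map _).mulVec a)).1, 0)) = a
        rw [hq W (hWV.trans hVU), Matrix.mulVec_mulVec, Matrix.mulVec_mulVec,
          ← hGHW hWV, ← Matrix.mul_assoc, hHGW hWV, Matrix.one_mul, hHGW hWV,
          Matrix.one_mulVec] }, ?_⟩
  -- compatibility with restriction
  intro W Z hWV hZW m
  show (H.map (CommRingCat.Hom.hom <| R.presheaf.map (homOfLE (hZW.trans hWV)).op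
      : R.presheaf.obj (op V) →+* _)).mulVec
        (e Z ((hZW.trans hWV).trans hVU) (M.res hZW m, 0))
    = fun i => R.presheaf.map (homOfLE hZW).op
        ((H.map (CommRingCat.Hom.hom <| R.presheaf.map (homOfLE hWV).op : R.presheaf.obj (op V) →+* _)).mulVec
          (e W (hWV.trans hVU) (m, 0)) i)
  rw [hnatM W Z (hWV.trans hVU) hZW m]
  have hHZ : (H.map (CommRingCat.Hom.hom <| R.presheaf.map (homOfLE (hZW.trans hWV)).op
        : R.presheaf.obj (op V) →+* _))
      = (H.map (CommRingCat.Hom.hom <| R.presheaf.map (homOfLE hWV).op : R.presheaf.obj (op V) →+* _)).map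
          (CommRingCat.Hom.hom <| R.presheaf.map (homOfLE hZW).op : R.presheaf.obj (op W) →+* _) :=
    Matrix.ext fun i j => (hρ_comp hWV hZW (H i j)).symm
  rw [hHZ]
  funext i
  exact (RingHom.map_mulVec (CommRingCat.Hom.hom <| R.presheaf.map (homOfLE hZW).op : R.presheaf.obj (op W) →+* _)
    (H.map (CommRingCat.Hom.hom <| R.presheaf.map (homOfLE hWV).op : R.presheaf.obj (op V) →+* _))
    (e W (hWV.trans hVU) (m, 0)) i).symm
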